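/- Fix n ≥ 3 and let L be an orthomodular ortholattice. Then L satisfies Godowski's equation n-Go (for all a₁, …, aₙ ∈ L, (a₁ →₁ a₂) ⊓ … ⊓ (aₙ₋₁ →₁ aₙ) ⊓ (aₙ →₁ a₁) = (aₙ →₁ aₙ₋₁) ⊓ … ⊓ (a₂ →₁ a₁) ⊓ (a₁ →₁ aₙ)) if and only if L satisfies the 2n-variable inference: for all a₁, b₁, …, aₙ, bₙ ∈ L, if a₁ ≤ b₁ᶜ, b₁ ≤ a₂ᶜ, a₂ ≤ b₂ᶜ, …, aₙ ≤ bₙᶜ, and bₙ ≤ a₁ᶜ, then (a₁ ⊔ b₁) ⊓ (a₂ ⊔ b₂) ⊓ … ⊓ (aₙ ⊔ bₙ) ≤ b₁ ⊔ a₂. -/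

import Mathlib

/-- An ortholattice: a bounded lattice with an orthocomplementation. -/
class Ortholattice (α : Type*) extends Lattice α, BoundedOrder α, Compl α where
  compl_compl : ∀ x : α, xᶜᶜ = x
  compl_antitone : ∀ x y : α, x ≤ y → yᶜ ≤ xᶜ
  inf_compl : ∀ x : α, x ⊓ xᶜ = ⊥
  sup_compl : ∀ x : α, x ⊔ xᶜ = ⊤

/-- The Sasaki implication `a →₁ b = aᶜ ⊔ (a ⊓ b)`. -/
def olImp1 {α : Type*} [Ortholattice α] (a b : α) : α := aᶜ ⊔ (a ⊓ b)

/-- The Dishkant implication `a →₂ b = b ⊔ (aᶜ ⊓ bᶜ)`. -/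
def olImp2 {α : Type*} [Ortholattice α] (a b : α) : α := b ⊔ (aᶜ ⊓ bᶜ)

namespace OLAux

variable {α : Type*} [Ortholattice α]

lemma cc (x : α) : xᶜᶜ = x := Ortholattice.compl_compl x

lemma anti {x y : α} (h : x ≤ y) : yᶜ ≤ xᶜ := Ortholattice.compl_antitone x y h

lemma le_compl_iff {x y : α} : x ≤ yᶜ ↔ y ≤ xᶜ :=
  ⟨fun h => (cc y) ▸ anti h, fun h => (cc x) ▸ anti h⟩

lemma compl_sup' (x y : α) : (x ⊔ y)ᶜ = xᶜ ⊓ yᶜ := by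
  refine le_antisymm (le_inf (anti le_sup_left) (anti le_sup_right)) ?_
  refine le_compl_iff.mpr (sup_le ?_ ?_)
  · exact le_compl_iff.mpr inf_le_left
  · exact le_compl_iff.mpr inf_le_right

lemma compl_inf' (x y : α) : (x ⊓ y)ᶜ = xᶜ ⊔ yᶜ := by
  have := compl_sup' xᶜ yᶜ
  rw [cc, cc] at this
  rw [← this, cc]

section OM

variable (hOM : ∀ a b : α, a ≤ b → a ⊔ (aᶜ ⊓ b) = b)
include hOM

/-- If `p ⊥ q` then `qᶜ ⊓ (p ⊔ q) = p`. -/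
lemma L1 {p q : α} (h : p ≤ qᶜ) : qᶜ ⊓ (p ⊔ q) = p := by
  have h1 : p ≤ qᶜ ⊓ (p ⊔ q) := le_inf h le_sup_left
  have h2 := hOM p _ h1
  have hz : pᶜ ⊓ (qᶜ ⊓ (p ⊔ q)) = ⊥ := by
    rw [← inf_assoc, ← compl_sup', inf_comm]
    exact Ortholattice.inf_compl (p ⊔ q)
  rw [hz, sup_bot_eq] at h2
  exact h2.symm

lemma L2 (x y : α) : x ⊓ (y ⊔ (x ⊔ y)ᶜ) ≤ y := by
  set c : α := x ⊔ y with hc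
  set e : α := yᶜ ⊓ c with he
  have hec : eᶜ = y ⊔ cᶜ := by rw [he, compl_inf', cc]
  have h1 : yᶜ ⊓ (cᶜ ⊔ y) = cᶜ := L1 hOM (anti le_sup_right)
  have h2 : e ⊔ (eᶜ ⊓ yᶜ) = yᶜ := hOM e yᶜ inf_le_left
  have h3 : eᶜ ⊓ yᶜ = cᶜ := by rw [hec, inf_comm, sup_comm]; exact h1
  rw [h3] at h2
  have h4 : yᶜ ≤ xᶜ ⊔ e := by
    rw [← h2]
    exact sup_le (le_sup_right) (le_sup_left.trans' (anti le_sup_left))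
  have h5 : (xᶜ ⊔ e)ᶜ ≤ y := by
    have := anti h4; rwa [cc] at this
  rw [compl_sup', cc] at h5
  rw [← hec]
  exact h5

/-- Key step: if `a0 ⊥ b0` and `b0 ⊥ a1` then
`(a0 ⊔ b0) ⊓ (a1 ⊔ (a0 ⊔ a1)ᶜ) ≤ b0 ⊔ a1`. -/
lemma core {a0 b0 a1 : α} (h1 : a0 ≤ b0ᶜ) (h2 : b0 ≤ a1ᶜ) :
    (a0 ⊔ b0) ⊓ (a1 ⊔ (a0 ⊔ a1)ᶜ) ≤ b0 ⊔ a1 := by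
  set t : α := (a0 ⊔ b0) ⊓ (a1 ⊔ (a0 ⊔ a1)ᶜ) with ht
  have hb : b0 ≤ t := by
    refine le_inf le_sup_right (le_sup_right.trans' ?_)
    rw [compl_sup']
    exact le_inf (le_compl_iff.mp h1) h2
  have hOMt := hOM b0 t hb
  have hsplit : b0ᶜ ⊓ t = a0 ⊓ (a1 ⊔ (a0 ⊔ a1)ᶜ) := by
    rw [ht, ← inf_assoc, L1 hOM h1]
  have hle : b0ᶜ ⊓ t ≤ a1 := hsplit ▸ L2 hOM a0 a1
  calc t = b0 ⊔ (b0ᶜ ⊓ t) := hOMt.symm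
    _ ≤ b0 ⊔ a1 := sup_le_sup_left hle _

end OM

lemma inf_reindex {n : ℕ} (σ : Fin n ≃ Fin n) (f : Fin n → α) :
    Finset.univ.inf (fun i => f (σ i)) = Finset.univ.inf f := by
  conv_rhs => rw [← Finset.map_univ_equiv σ, Finset.inf_map]
  rfl

end OLAux

/-- For fixed n ≥ 3 (here n = m + 3), an orthomodular ortholattice satisfies
Godowski'\''s equation n-Go iff it satisfies the 2n-variable inference. -/
theorem stmt_11 (α : Type*) [Ortholattice α]
    (hOM : ∀ a b : α, a ≤ b → a ⊔ (aᶜ ⊓ b) = b) (m : ℕ) :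
    (∀ a : Fin (m + 3) → α,
        (Finset.univ.inf fun i => olImp1 (a i) (a (i + 1))) =
          (Finset.univ.inf fun i => olImp1 (a (i + 1)) (a i))) ↔
      (∀ a b : Fin (m + 3) → α,
        (∀ i, a i ≤ (b i)ᶜ) → (∀ i, b i ≤ (a (i + 1))ᶜ) →
          (Finset.univ.inf fun i => a i ⊔ b i) ≤ b 0 ⊔ a 1) := by
  open OLAux in
  constructor
  · -- equation → inference
    intro E a b ha hb
    have key : (Finset.univ.inf fun i => a i ⊔ b i) ≤
        olImp1 (a (0 + 1))ᶜ (a 0)ᶜ := by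
      calc (Finset.univ.inf fun i => a i ⊔ b i)
          ≤ Finset.univ.inf (fun i => olImp1 (a i)ᶜ (a (i + 1))ᶜ) := by
            refine Finset.le_inf fun j _ => (Finset.inf_le (Finset.mem_univ j)).trans ?_
            show a j ⊔ b j ≤ (a j)ᶜᶜ ⊔ ((a j)ᶜ ⊓ (a (j + 1))ᶜ)
            rw [cc]
            exact sup_le_sup_left (le_inf (le_compl_iff.mp (ha j)) (hb j)) _
        _ = Finset.univ.inf (fun i => olImp1 (a (i + 1))ᶜ (a i)ᶜ) := E (fun i => (a i)ᶜ)
        _ ≤ olImp1 (a (0 + 1))ᶜ (a 0)ᶜ := Finset.inf_le (Finset.mem_univ 0)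
    have hkey' : olImp1 (a (0 + 1))ᶜ (a 0)ᶜ = a 1 ⊔ (a 0 ⊔ a 1)ᶜ := by
      show (a (0 + 1))ᶜᶜ ⊔ ((a (0 + 1))ᶜ ⊓ (a 0)ᶜ) = _
      rw [zero_add, cc, compl_sup', inf_comm]
    rw [hkey'] at key
    have h0 : (Finset.univ.inf fun i => a i ⊔ b i) ≤ a 0 ⊔ b 0 :=
      Finset.inf_le (Finset.mem_univ 0)
    have hb0 : b 0 ≤ (a 1)ᶜ := by have := hb 0; rwa [zero_add] at this
    exact (le_inf h0 key).trans (core hOM (ha 0) hb0)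
  · -- inference → equation
    intro H a
    have main : ∀ x : Fin (m + 3) → α,
        (Finset.univ.inf fun i => olImp1 (x i) (x (i + 1))) ≤
          (Finset.univ.inf fun i => olImp1 (x (i + 1)) (x i)) := by
      intro x
      refine Finset.le_inf fun j _ => ?_
      have hA : ∀ i, (x (i + j))ᶜ ≤ (x (i + j) ⊓ x (i + j + 1))ᶜ := fun i =>
        anti inf_le_left
      have hB : ∀ i : Fin (m + 3), x (i + j) ⊓ x (i + j + 1) ≤ ((x (i + 1 + j))ᶜ)ᶜ := by
        intro i
        rw [cc]
        have : i + j + 1 = i + 1 + j := add_right_comm i j 1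
        rw [← this]
        exact inf_le_right
      have hH := H (fun i => (x (i + j))ᶜ) (fun i => x (i + j) ⊓ x (i + j + 1)) hA hB
      have e1 : (Finset.univ.inf fun i => (x (i + j))ᶜ ⊔ (x (i + j) ⊓ x (i + j + 1))) =
          (Finset.univ.inf fun i => olImp1 (x i) (x (i + 1))) := by
        exact inf_reindex (Equiv.addRight j) (fun i => olImp1 (x i) (x (i + 1)))
      rw [e1] at hH
      have e2 : (x (0 + j) ⊓ x (0 + j + 1)) ⊔ (x (1 + j))ᶜ = olImp1 (x (j + 1)) (x j) := by
        show _ = (x (j + 1))ᶜ ⊔ (x (j + 1) ⊓ x j)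
        have h01 : (0 : Fin (m + 3)) + j = j := zero_add j
        have h11 : (1 : Fin (m + 3)) + j = j + 1 := add_comm 1 j
        rw [h01, h11, sup_comm, inf_comm]
      rw [e2] at hH
      exact hH
    refine le_antisymm (main a) ?_
    have hmain := main (fun i => a (-i))
    have e1 : (Finset.univ.inf fun i => olImp1 (a (-i)) (a (-(i + 1)))) =
        (Finset.univ.inf fun i => olImp1 (a (i + 1)) (a i)) := by
      rw [← inf_reindex ((Equiv.addRight (1 : Fin (m + 3))).trans (Equiv.neg _))
        (fun i => olImp1 (a (i + 1)) (a i))]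
      refine Finset.inf_congr rfl fun i _ => ?_
      show olImp1 (a (-i)) (a (-(i + 1))) = olImp1 (a (-(i + 1) + 1)) (a (-(i + 1)))
      have h : -(i + 1) + 1 = -i := by rw [neg_add, neg_add_cancel_right]
      rw [h]
    have e2 : (Finset.univ.inf fun i => olImp1 (a (-(i + 1))) (a (-i))) =
        (Finset.univ.inf fun i => olImp1 (a i) (a (i + 1))) := by
      rw [← inf_reindex ((Equiv.addRight (1 : Fin (m + 3))).trans (Equiv.neg _))
        (fun i => olImp1 (a i) (a (i + 1)))]
      refine Finset.inf_congr rfl fun i _ => ?_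
      show olImp1 (a (-(i + 1))) (a (-i)) = olImp1 (a (-(i + 1))) (a (-(i + 1) + 1))
      have h : -(i + 1) + 1 = -i := by rw [neg_add, neg_add_cancel_right]
      rw [h]
    rw [e1, e2] at hmain
    exact hmain
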